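/- For every x > 0, the function x ↦ m(√x)/√x of the Mills ratio of the standard normal law is a Stieltjes transform; explicitly, m(√x)/√x = (1/√(2π)) ∫₀^∞ (1/(x + s)) · (e^{-s/2}/√s) ds for all x > 0. -/

import Mathlib

/-- The standard normal probability density function. -/
noncomputable def stdNormalPDF (t : ℝ) : ℝ := Real.exp (-t ^ 2 / 2) / Real.sqrt (2 * Real.pi)

/-- The Mills ratio of the standard normal distribution: survival function over density. -/
noncomputable def millsRatio (x : ℝ) : ℝ := (∫ t in Set.Ioi x, stdNormalPDF t) / stdNormalPDF x

open MeasureTheory Real Set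

private lemma exp_neg_int (c : ℝ) (hc : 0 < c) :
    ∫ v in Ioi (0:ℝ), Real.exp (-(c * v)) = 1 / c := by
  have := integral_comp_mul_left_Ioi (fun y => Real.exp (-y)) 0 hc
  simp only [mul_zero] at this
  rw [this, integral_exp_neg_Ioi_zero]
  simp [one_div]

private lemma step_sq (x : ℝ) (hx : 0 < x) :
    ∫ s in Ioi (0:ℝ), (1 / (x + s)) * (Real.exp (-s / 2) / Real.sqrt s)
      = ∫ u in Ioi (0:ℝ), 2 * Real.exp (-u ^ 2 / 2) / (x + u ^ 2) := by
  have himg : (fun u : ℝ => u ^ 2) '' Ioi 0 = Ioi 0 := by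
    ext y; constructor
    · rintro ⟨u, hu, rfl⟩; exact pow_pos (show (0:ℝ) < u from hu) 2
    · intro hy; exact ⟨Real.sqrt y, Real.sqrt_pos.2 hy, Real.sq_sqrt hy.le⟩
  have hder : ∀ u ∈ Ioi (0:ℝ), HasDerivWithinAt (fun u : ℝ => u ^ 2) (2 * u) (Ioi 0) u := by
    intro u _
    simpa using ((hasDerivAt_pow 2 u).hasDerivWithinAt)
  have hinj : InjOn (fun u : ℝ => u ^ 2) (Ioi 0) := fun a ha b hb h => by
    have ha' : (0:ℝ) < a := ha
    have hb' : (0:ℝ) < b := hb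
    simp only at h; nlinarith [h]
  have key := integral_image_eq_integral_abs_deriv_smul measurableSet_Ioi hder hinj
    (fun s => (1 / (x + s)) * (Real.exp (-s / 2) / Real.sqrt s))
  rw [himg] at key
  rw [key]
  apply setIntegral_congr_fun measurableSet_Ioi
  intro u hu
  have hu' : (0:ℝ) < u := hu
  have hs : Real.sqrt (u ^ 2) = u := Real.sqrt_sq hu'.le
  have hxu : (0:ℝ) < x + u ^ 2 := by positivity
  simp only [smul_eq_mul, hs, abs_of_pos (by linarith : (0:ℝ) < 2 * u)]
  field_simp

private lemma step_fubini (x : ℝ) (hx : 0 < x) :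
    ∫ u in Ioi (0:ℝ), 2 * Real.exp (-u ^ 2 / 2) / (x + u ^ 2)
      = Real.sqrt π * ∫ v in Ioi (0:ℝ), Real.exp (-(x * v)) / Real.sqrt (v + 1/2) := by
  set F : ℝ → ℝ → ℝ := fun u v => Real.exp (-u ^ 2 / 2) * Real.exp (-((x + u ^ 2) * v)) with hF
  have hμ : ((volume : Measure ℝ).restrict (Ioi 0)).prod ((volume : Measure ℝ).restrict (Ioi 0))
      = ((volume : Measure ℝ).prod (volume : Measure ℝ)).restrict ((Ioi 0) ×ˢ (Ioi 0)) := by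
    rw [Measure.prod_restrict]
  have hFcont : Continuous (Function.uncurry F) := by
    simp only [hF, Function.uncurry]
    fun_prop
  have hGint : Integrable (fun p : ℝ × ℝ => Real.exp (-(1/2) * p.1 ^ 2) * Real.exp (-x * p.2))
      (((volume : Measure ℝ).restrict (Ioi 0)).prod ((volume : Measure ℝ).restrict (Ioi 0))) := by
    exact Integrable.mul_prod ((integrable_exp_neg_mul_sq (by norm_num)).restrict)
      (exp_neg_integrableOn_Ioi 0 hx)
  have hFint : Integrable (Function.uncurry F)
      (((volume : Measure ℝ).restrict (Ioi 0)).prod ((volume : Measure ℝ).restrict (Ioi 0))) := by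
    refine hGint.mono hFcont.aestronglyMeasurable ?_
    rw [hμ]
    refine (ae_restrict_iff' (measurableSet_Ioi.prod measurableSet_Ioi)).2
      (Filter.Eventually.of_forall ?_)
    rintro ⟨u, v⟩ ⟨(hu : (0:ℝ) < u), (hv : (0:ℝ) < v)⟩
    simp only [Function.uncurry, hF, norm_mul, Real.norm_eq_abs, Real.abs_exp]
    rw [← Real.exp_add, ← Real.exp_add]
    apply Real.exp_le_exp.2
    nlinarith [sq_nonneg u, hv.le]
  have step1 : ∫ u in Ioi (0:ℝ), 2 * Real.exp (-u ^ 2 / 2) / (x + u ^ 2)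
      = 2 * ∫ u in Ioi (0:ℝ), ∫ v in Ioi (0:ℝ), F u v := by
    rw [← integral_const_mul]
    apply setIntegral_congr_fun measurableSet_Ioi
    intro u hu
    have hxu : (0:ℝ) < x + u ^ 2 := by positivity
    simp only [hF]
    rw [integral_const_mul, exp_neg_int _ hxu]
    field_simp
  rw [step1, integral_integral_swap hFint]
  rw [← integral_const_mul, ← integral_const_mul]
  apply setIntegral_congr_fun measurableSet_Ioi
  intro v hv
  have hv' : (0:ℝ) < v := hv
  have hb : (0:ℝ) < v + 1/2 := by linarith
  have inner : ∫ u in Ioi (0:ℝ), F u v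
      = Real.exp (-(x * v)) * ∫ u in Ioi (0:ℝ), Real.exp (-(v + 1/2) * u ^ 2) := by
    rw [← integral_const_mul]
    apply setIntegral_congr_fun measurableSet_Ioi
    intro u _
    simp only [hF, ← Real.exp_add]
    ring_nf
  dsimp only
  rw [inner, integral_gaussian_Ioi, Real.sqrt_div pi_pos.le]
  field_simp

private lemma step_back (x : ℝ) (hx : 0 < x) :
    ∫ v in Ioi (0:ℝ), Real.exp (-(x * v)) / Real.sqrt (v + 1/2)
      = (Real.sqrt 2 / Real.sqrt x) * Real.exp (x / 2)
        * ∫ t in Ioi (Real.sqrt x), Real.exp (-t ^ 2 / 2) := by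
  set f : ℝ → ℝ := fun t => (t ^ 2 - x) / (2 * x) with hf
  have hsx : (0:ℝ) < Real.sqrt x := Real.sqrt_pos.2 hx
  have himg : f '' Ioi (Real.sqrt x) = Ioi 0 := by
    ext y; constructor
    · rintro ⟨t, ht, rfl⟩
      have ht' : Real.sqrt x < t := ht
      have h2 : x < t ^ 2 := by
        have := Real.sq_sqrt hx.le
        nlinarith
      simp only [hf, mem_Ioi]
      exact div_pos (by linarith) (by positivity)
    · intro hy
      refine ⟨Real.sqrt (2 * x * y + x), ?_, ?_⟩
      · have : x < 2 * x * y + x := by nlinarith [mem_Ioi.1 hy]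
        exact (Real.sqrt_lt_sqrt hx.le this)
      · simp only [hf]
        rw [Real.sq_sqrt (by nlinarith [mem_Ioi.1 hy] : (0:ℝ) ≤ 2 * x * y + x)]
        field_simp
        ring
  have hder : ∀ t ∈ Ioi (Real.sqrt x), HasDerivWithinAt f (t / x) (Ioi (Real.sqrt x)) t := by
    intro t _
    have : HasDerivAt f (2 * t / (2 * x)) t := by
      simpa using ((hasDerivAt_pow 2 t).sub_const x).div_const (2 * x)
    have h2 : 2 * t / (2 * x) = t / x := by field_simp
    rw [h2] at this
    exact this.hasDerivWithinAt
  have hinj : InjOn f (Ioi (Real.sqrt x)) := fun a ha b hb h => by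
    simp only [hf, div_eq_div_iff (by positivity : (0:ℝ) < 2*x).ne'
      (by positivity : (0:ℝ) < 2*x).ne'] at h
    have ha' : (0:ℝ) < a := hsx.trans ha
    have hb' : (0:ℝ) < b := hsx.trans hb
    have h' : a ^ 2 = b ^ 2 := by
      have h2x : (2*x) ≠ 0 := by positivity
      field_simp at h
      nlinarith [h]
    nlinarith [h']
  have key := integral_image_eq_integral_abs_deriv_smul measurableSet_Ioi hder hinj
    (fun v => Real.exp (-(x * v)) / Real.sqrt (v + 1/2))
  rw [himg] at key
  rw [key, ← integral_const_mul]
  apply setIntegral_congr_fun measurableSet_Ioi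
  intro t ht
  have ht' : Real.sqrt x < t := ht
  have htpos : 0 < t := lt_trans hsx ht'
  have h1 : f t + 1/2 = t ^ 2 / (2 * x) := by simp only [hf]; field_simp; ring
  have h2 : Real.sqrt (t ^ 2 / (2 * x)) = t / Real.sqrt (2 * x) := by
    rw [Real.sqrt_div (sq_nonneg t), Real.sqrt_sq htpos.le]
  have h3 : -(x * f t) = x/2 + (-t^2/2) := by simp only [hf]; field_simp; ring
  have h4 : Real.sqrt (2*x) = Real.sqrt 2 * Real.sqrt x := Real.sqrt_mul (by norm_num) x
  have h5 : Real.sqrt x * Real.sqrt x = x := Real.mul_self_sqrt hx.le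
  simp only [smul_eq_mul, h1, h2, h3, Real.exp_add, abs_of_pos (div_pos htpos hx), h4]
  field_simp
  linear_combination h5

/-- For every `x > 0`, the function `x ↦ m(√x)/√x` of the Mills ratio of the standard
normal law is a Stieltjes transform; explicitly,
`m(√x)/√x = (1/√(2π)) ∫₀^∞ (1/(x + s)) · (e^{-s/2}/√s) ds`. -/
theorem millsRatio_sqrt_div_sqrt_stieltjes (x : ℝ) (hx : 0 < x) :
    millsRatio (Real.sqrt x) / Real.sqrt x =
      (1 / Real.sqrt (2 * Real.pi)) *
        ∫ s in Set.Ioi (0 : ℝ), (1 / (x + s)) * (Real.exp (-s / 2) / Real.sqrt s) := by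
  rw [step_sq x hx, step_fubini x hx, step_back x hx]
  have hsx : (0:ℝ) < Real.sqrt x := Real.sqrt_pos.2 hx
  have hC : (0:ℝ) < Real.sqrt (2 * π) := Real.sqrt_pos.2 (by positivity)
  have hCsplit : Real.sqrt (2 * π) = Real.sqrt 2 * Real.sqrt π := Real.sqrt_mul (by norm_num) π
  have hpdf : stdNormalPDF (Real.sqrt x) = Real.exp (-x / 2) / Real.sqrt (2 * π) := by
    rw [stdNormalPDF, Real.sq_sqrt hx.le]
  have hnum : (∫ t in Set.Ioi (Real.sqrt x), stdNormalPDF t)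
      = (∫ t in Set.Ioi (Real.sqrt x), Real.exp (-t ^ 2 / 2)) / Real.sqrt (2 * π) := by
    simp only [stdNormalPDF]
    rw [integral_div]
  rw [millsRatio, hpdf, hnum]
  set J := ∫ t in Set.Ioi (Real.sqrt x), Real.exp (-t ^ 2 / 2) with hJ
  have hexp : Real.exp (-x/2) * Real.exp (x/2) = 1 := by
    rw [← Real.exp_add]; ring_nf; exact Real.exp_zero
  rw [hCsplit]
  have h2 : Real.sqrt 2 * Real.sqrt 2 = 2 := Real.mul_self_sqrt (by norm_num)
  field_simp
  rw [← neg_div]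
  linear_combination (-J) * hexp
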